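/- Let D(σ, N) = D_min + (a/σ)^α + (b/N)^β, C(σ, N) = k σ N D(σ, N), F(σ, N) = C(σ, N) + δ·D(σ, N), with a, b, k, δ > 0, D_min ≥ 0, and α, β ∈ (0,1). Then F attains a global minimum on (0,∞)², the minimizer (σ*, N*) is unique, and it satisfies N* = ((β b^β)/(α a^α))^{1/β} (σ*)^{α/β}. -/

import Mathlib

open Real

private lemma aux_deriv1 (a b α β k δ Dmin : ℝ) (s n : ℝ) (hs : 0 < s) :
    HasDerivAt (fun σ : ℝ => (k*σ*n + δ) * (Dmin + a^α * σ^(-α) + b^β * n^(-β)))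
      (k*n*(Dmin + a^α*s^(-α) + b^β*n^(-β)) + (k*s*n+δ)*(a^α*(-α*s^(-α-1)))) s := by
  have h1 : HasDerivAt (fun σ : ℝ => k*σ*n + δ) (k*n) s := by
    simpa using (((hasDerivAt_id s).const_mul k).mul_const n).add_const δ
  have h2 : HasDerivAt (fun σ : ℝ => Dmin + a^α * σ^(-α) + b^β*n^(-β))
      (a^α * (-α * s^(-α-1))) s := by
    have h := (Real.hasDerivAt_rpow_const (p := -α) (Or.inl hs.ne')).const_mul (a^α)
    simpa using (h.const_add Dmin).add_const (b^β*n^(-β))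
  exact h1.mul h2

private lemma aux_deriv2 (a b α β k δ Dmin : ℝ) (s n : ℝ) (hn : 0 < n) :
    HasDerivAt (fun N : ℝ => (k*s*N + δ) * (Dmin + a^α * s^(-α) + b^β * N^(-β)))
      (k*s*(Dmin + a^α*s^(-α) + b^β*n^(-β)) + (k*s*n+δ)*(b^β*(-β*n^(-β-1)))) n := by
  have h1 : HasDerivAt (fun N : ℝ => k*s*N + δ) (k*s) n := by
    simpa using (((hasDerivAt_id n).const_mul (k*s))).add_const δ
  have h2 : HasDerivAt (fun N : ℝ => Dmin + a^α * s^(-α) + b^β*N^(-β))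
      (b^β * (-β * n^(-β-1))) n := by
    have h := (Real.hasDerivAt_rpow_const (p := -β) (Or.inl hn.ne')).const_mul (b^β)
    exact (h.const_add (Dmin + a^α * s^(-α)))
  exact h1.mul h2

private lemma aux_crit (a b α β k δ Dmin : ℝ) (F : ℝ → ℝ → ℝ)
    (hP : ∀ σ N, 0 < σ → 0 < N → F σ N = (k*σ*N + δ) * (Dmin + a^α * σ^(-α) + b^β * N^(-β)))
    (s n : ℝ) (hs : 0 < s) (hn : 0 < n)
    (hmin : ∀ σ N, 0 < σ → 0 < N → F s n ≤ F σ N) :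
    k*s*n*(Dmin + a^α*s^(-α) + b^β*n^(-β)) = (k*s*n+δ)*(α*a^α*s^(-α)) ∧
    k*s*n*(Dmin + a^α*s^(-α) + b^β*n^(-β)) = (k*s*n+δ)*(β*b^β*n^(-β)) := by
  have hev1 : (fun σ => F σ n) =ᶠ[nhds s]
      (fun σ => (k*σ*n + δ) * (Dmin + a^α * σ^(-α) + b^β * n^(-β))) :=
    (eventually_gt_nhds hs).mono fun σ hσ => hP σ n hσ hn
  have hD1 : HasDerivAt (fun σ => F σ n)
      (k*n*(Dmin + a^α*s^(-α) + b^β*n^(-β)) + (k*s*n+δ)*(a^α*(-α*s^(-α-1)))) s :=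
    (aux_deriv1 a b α β k δ Dmin s n hs).congr_of_eventuallyEq hev1
  have hloc1 : IsLocalMin (fun σ => F σ n) s :=
    (eventually_gt_nhds hs).mono fun σ hσ => hmin σ n hσ hn
  have h01 := hloc1.hasDerivAt_eq_zero hD1
  have hev2 : (fun N => F s N) =ᶠ[nhds n]
      (fun N => (k*s*N + δ) * (Dmin + a^α * s^(-α) + b^β * N^(-β))) :=
    (eventually_gt_nhds hn).mono fun N hN => hP s N hs hN
  have hD2 : HasDerivAt (fun N => F s N)
      (k*s*(Dmin + a^α*s^(-α) + b^β*n^(-β)) + (k*s*n+δ)*(b^β*(-β*n^(-β-1)))) n :=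
    (aux_deriv2 a b α β k δ Dmin s n hn).congr_of_eventuallyEq hev2
  have hloc2 : IsLocalMin (fun N => F s N) n :=
    (eventually_gt_nhds hn).mono fun N hN => hmin s N hs hN
  have h02 := hloc2.hasDerivAt_eq_zero hD2
  have hss : s^(-α-1) * s = s^(-α) := by
    rw [← Real.rpow_add_one hs.ne' (-α-1)]; ring_nf
  have hnn : n^(-β-1) * n = n^(-β) := by
    rw [← Real.rpow_add_one hn.ne' (-β-1)]; ring_nf
  constructor
  · linear_combination s * h01 + ((k*s*n+δ)*α*a^α) * hss
  · linear_combination n * h02 + ((k*s*n+δ)*β*b^β) * hnn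

private lemma aux_ridge (a b α β : ℝ) (ha : 0 < a) (hb : 0 < b) (hα : 0 < α) (hβ : 0 < β)
    (s n : ℝ) (hs : 0 < s) (hn : 0 < n)
    (hkey : α*a^α*s^(-α) = β*b^β*n^(-β)) :
    n = ((β * b ^ β) / (α * a ^ α)) ^ (1 / β) * s ^ (α/β) := by
  have h1 : n^β * n^(-β) = 1 := by
    rw [← Real.rpow_add hn]; simp
  have h2 : s^(-α) * s^α = 1 := by
    rw [← Real.rpow_add hs]; simp
  have hA : (0:ℝ) < α*a^α := by positivity
  have hnb : n^β = (β*b^β)/(α*a^α) * s^α := by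
    rw [div_mul_eq_mul_div, eq_div_iff hA.ne']
    linear_combination (n^β*s^α)*hkey + (β*b^β*s^α)*h1 + (-(α*a^α*n^β))*h2
  have hmul : ((β*b^β)/(α*a^α) * s^α) ^ (1/β) =
      ((β * b ^ β) / (α * a ^ α)) ^ (1 / β) * (s^α) ^ (1/β) :=
    Real.mul_rpow (by positivity) (by positivity)
  have hsa : (s^α)^(1/β) = s^(α/β) := by
    rw [← Real.rpow_mul hs.le, mul_one_div]
  calc n = (n^β)^(1/β) := by
        rw [← Real.rpow_mul hn.le, mul_one_div_cancel hβ.ne', Real.rpow_one]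
    _ = _ := by rw [hnb, hmul, hsa]

private lemma aux_phi (a b α β k δ Dmin c : ℝ)
    (s n : ℝ) (hspos : 0 < s)
    (e1 : k*s*n*(Dmin + a^α*s^(-α) + b^β*n^(-β)) = (k*s*n+δ)*(α*a^α*s^(-α)))
    (hkey : α*a^α*s^(-α) = β*b^β*n^(-β))
    (hn_eq : n = c * s^(α/β)) :
    β*k*c*Dmin*s^(1+α/β+α) + (β+α-α*β)*k*c*a^α*s^(1+α/β) = β*(δ*α*a^α) := by
  subst hn_eq
  have h2 : s^(-α) * s^α = 1 := by rw [← Real.rpow_add hspos]; simp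
  have h3 : s * s^(α/β) = s^(1+α/β) := by
    rw [Real.rpow_add hspos, Real.rpow_one]
  have h4 : s^(1+α/β) * s^α = s^(1+α/β+α) := by
    rw [← Real.rpow_add hspos]
  linear_combination (β*s^α)*e1 + (k*c*s*s^(α/β)*s^α)*hkey
    + (β*δ*α*a^α - k*c*a^α*(β+α-α*β)*s*s^(α/β))*h2
    + (-(k*c*a^α*(β+α-α*β)) - β*k*c*Dmin*s^α)*h3
    + (-(β*k*c*Dmin))*h4

private lemma aux_inj (a α β k c Dmin δ : ℝ) (ha : 0 < a) (hk : 0 < k) (hc : 0 < c)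
    (hα : 0 < α) (hβ : 0 < β) (hβ1 : β < 1) (hDmin : 0 ≤ Dmin)
    (s t : ℝ) (hs : 0 < s) (ht : 0 < t)
    (h1 : β*k*c*Dmin*s^(1+α/β+α) + (β+α-α*β)*k*c*a^α*s^(1+α/β) = β*(δ*α*a^α))
    (h2 : β*k*c*Dmin*t^(1+α/β+α) + (β+α-α*β)*k*c*a^α*t^(1+α/β) = β*(δ*α*a^α)) :
    s = t := by
  have hcoef : 0 < (β+α-α*β)*k*c*a^α := by
    have h0 : 0 < α*(1-β) := mul_pos hα (by linarith)
    have h1 : 0 < β+α-α*β := by nlinarith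
    positivity
  have he1 : (0:ℝ) < 1+α/β+α := by positivity
  have he2 : (0:ℝ) < 1+α/β := by positivity
  have key : ∀ u v : ℝ, 0 < u → u < v →
      β*k*c*Dmin*u^(1+α/β+α) + (β+α-α*β)*k*c*a^α*u^(1+α/β) <
      β*k*c*Dmin*v^(1+α/β+α) + (β+α-α*β)*k*c*a^α*v^(1+α/β) := by
    intro u v hu huv
    have t1 : β*k*c*Dmin*u^(1+α/β+α) ≤ β*k*c*Dmin*v^(1+α/β+α) :=
      mul_le_mul_of_nonneg_left (Real.rpow_le_rpow hu.le huv.le he1.le) (by positivity)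
    have t2 : (β+α-α*β)*k*c*a^α*u^(1+α/β) < (β+α-α*β)*k*c*a^α*v^(1+α/β) :=
      mul_lt_mul_of_pos_left (Real.rpow_lt_rpow hu.le huv he2) hcoef
    linarith
  rcases lt_trichotomy s t with h | h | h
  · exact absurd (h1.trans h2.symm) (key s t hs h).ne
  · exact h
  · exact absurd (h2.trans h1.symm) (key t s ht h).ne

private lemma aux_exists (a b α β k δ Dmin : ℝ)
    (ha : 0 < a) (hb : 0 < b) (hk : 0 < k) (hδ : 0 < δ)
    (hα : 0 < α) (hα1 : α < 1) (hβ : 0 < β) (hβ1 : β < 1) (hDmin : 0 ≤ Dmin)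
    (F : ℝ → ℝ → ℝ)
    (hP : ∀ σ N, 0 < σ → 0 < N → F σ N = (k*σ*N + δ) * (Dmin + a^α * σ^(-α) + b^β * N^(-β))) :
    ∃ p : ℝ × ℝ, 0 < p.1 ∧ 0 < p.2 ∧ ∀ σ N, 0 < σ → 0 < N → F p.1 p.2 ≤ F σ N := by
  set M := F 1 1 with hM_def
  have hMeq : M = (k + δ) * (Dmin + a^α + b^β) := by
    rw [hM_def, hP 1 1 one_pos one_pos]; simp
  have hM : 0 < M := by rw [hMeq]; positivity
  have lb1 : ∀ σ N, 0 < σ → 0 < N → δ*(a^α*σ^(-α)) ≤ F σ N := by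
    intro σ N hσ hN
    rw [hP σ N hσ hN]
    have f1 : 0 ≤ a^α*σ^(-α) := by positivity
    have f2 : 0 ≤ b^β*N^(-β) := by positivity
    have f3 : 0 ≤ k*σ*N := by positivity
    nlinarith
  have lb2 : ∀ σ N, 0 < σ → 0 < N → δ*(b^β*N^(-β)) ≤ F σ N := by
    intro σ N hσ hN
    rw [hP σ N hσ hN]
    have f1 : 0 ≤ a^α*σ^(-α) := by positivity
    have f2 : 0 ≤ b^β*N^(-β) := by positivity
    have f3 : 0 ≤ k*σ*N := by positivity
    nlinarith
  have lb3 : ∀ σ N, 0 < σ → 0 < N → k*a^α*σ^(1-α)*N ≤ F σ N := by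
    intro σ N hσ hN
    rw [hP σ N hσ hN]
    have hpow : σ^(1-α) = σ * σ^(-α) := by
      rw [show (1-α) = 1 + (-α) by ring, Real.rpow_add hσ, Real.rpow_one]
    rw [hpow]
    have f1 : 0 ≤ a^α*σ^(-α) := by positivity
    have f2 : 0 ≤ b^β*N^(-β) := by positivity
    have f3 : 0 ≤ k*σ*N := by positivity
    nlinarith
  have lb4 : ∀ σ N, 0 < σ → 0 < N → k*b^β*σ*N^(1-β) ≤ F σ N := by
    intro σ N hσ hN
    rw [hP σ N hσ hN]
    have hpow : N^(1-β) = N * N^(-β) := by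
      rw [show (1-β) = 1 + (-β) by ring, Real.rpow_add hN, Real.rpow_one]
    rw [hpow]
    have f1 : 0 ≤ a^α*σ^(-α) := by positivity
    have f2 : 0 ≤ b^β*N^(-β) := by positivity
    have f3 : 0 ≤ k*σ*N := by positivity
    nlinarith
  set t1 : ℝ := (δ*a^α/(M+1))^(α⁻¹) with ht1_def
  have ht1 : 0 < t1 := Real.rpow_pos_of_pos (by positivity) _
  have ht1a : t1^α = δ*a^α/(M+1) := Real.rpow_inv_rpow (by positivity) hα.ne'
  set s0 : ℝ := min 1 t1 with hs0_def
  have hs0 : 0 < s0 := lt_min one_pos ht1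
  set t2 : ℝ := (δ*b^β/(M+1))^(β⁻¹) with ht2_def
  have ht2 : 0 < t2 := Real.rpow_pos_of_pos (by positivity) _
  have ht2a : t2^β = δ*b^β/(M+1) := Real.rpow_inv_rpow (by positivity) hβ.ne'
  set n0 : ℝ := min 1 t2 with hn0_def
  have hn0 : 0 < n0 := lt_min one_pos ht2
  have h1α : (0:ℝ) < 1 - α := by linarith
  have h1β : (0:ℝ) < 1 - β := by linarith
  set S1 : ℝ := ((M+1)/(k*a^α*n0))^((1-α)⁻¹) with hS1_def
  have hS1 : 0 < S1 := Real.rpow_pos_of_pos (by positivity) _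
  have hS1a : S1^(1-α) = (M+1)/(k*a^α*n0) := Real.rpow_inv_rpow (by positivity) h1α.ne'
  set S : ℝ := max 1 S1 with hS_def
  set N1 : ℝ := ((M+1)/(k*b^β*s0))^((1-β)⁻¹) with hN1_def
  have hN1 : 0 < N1 := Real.rpow_pos_of_pos (by positivity) _
  have hN1a : N1^(1-β) = (M+1)/(k*b^β*s0) := Real.rpow_inv_rpow (by positivity) h1β.ne'
  set NR : ℝ := max 1 N1 with hNR_def
  have hb1 : ∀ σ N, 0 < σ → 0 < N → σ ≤ s0 → M + 1 ≤ F σ N := by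
    intro σ N hσ hN hσs
    have h1 : σ^α ≤ t1^α :=
      Real.rpow_le_rpow hσ.le (hσs.trans (min_le_right _ _)) hα.le
    have h2 : (t1^α)⁻¹ ≤ (σ^α)⁻¹ := by
      apply inv_anti₀ (by positivity) h1
    rw [ht1a, inv_div] at h2
    rw [div_le_iff₀ (by positivity)] at h2
    have h3 : σ^(-α) = (σ^α)⁻¹ := Real.rpow_neg hσ.le α
    calc M + 1 ≤ (σ^α)⁻¹ * (δ*a^α) := h2
      _ = δ*(a^α*σ^(-α)) := by rw [h3]; ring
      _ ≤ F σ N := lb1 σ N hσ hN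
  have hb2 : ∀ σ N, 0 < σ → 0 < N → N ≤ n0 → M + 1 ≤ F σ N := by
    intro σ N hσ hN hNs
    have h1 : N^β ≤ t2^β :=
      Real.rpow_le_rpow hN.le (hNs.trans (min_le_right _ _)) hβ.le
    have h2 : (t2^β)⁻¹ ≤ (N^β)⁻¹ := by
      apply inv_anti₀ (by positivity) h1
    rw [ht2a, inv_div] at h2
    rw [div_le_iff₀ (by positivity)] at h2
    have h3 : N^(-β) = (N^β)⁻¹ := Real.rpow_neg hN.le β
    calc M + 1 ≤ (N^β)⁻¹ * (δ*b^β) := h2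
      _ = δ*(b^β*N^(-β)) := by rw [h3]; ring
      _ ≤ F σ N := lb2 σ N hσ hN
  have hb3 : ∀ σ N, 0 < σ → 0 < N → n0 ≤ N → S1 ≤ σ → M + 1 ≤ F σ N := by
    intro σ N hσ hN hNn hσS
    have hx : S1^(1-α) ≤ σ^(1-α) := Real.rpow_le_rpow hS1.le hσS h1α.le
    have heq : k*a^α*S1^(1-α)*n0 = M+1 := by
      rw [hS1a]; field_simp
    have hstep : k*a^α*S1^(1-α)*n0 ≤ k*a^α*σ^(1-α)*N := by
      apply mul_le_mul (mul_le_mul_of_nonneg_left hx (by positivity)) hNn hn0.le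
      positivity
    calc M + 1 = k*a^α*S1^(1-α)*n0 := heq.symm
      _ ≤ k*a^α*σ^(1-α)*N := hstep
      _ ≤ F σ N := lb3 σ N hσ hN
  have hb4 : ∀ σ N, 0 < σ → 0 < N → s0 ≤ σ → N1 ≤ N → M + 1 ≤ F σ N := by
    intro σ N hσ hN hσs hNS
    have hx : N1^(1-β) ≤ N^(1-β) := Real.rpow_le_rpow hN1.le hNS h1β.le
    have heq : k*b^β*s0*N1^(1-β) = M+1 := by
      rw [hN1a]; field_simp
    have hstep : k*b^β*s0*N1^(1-β) ≤ k*b^β*σ*N^(1-β) := by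
      apply mul_le_mul (mul_le_mul_of_nonneg_left hσs (by positivity)) hx
        (by positivity) (by positivity)
    calc M + 1 = k*b^β*s0*N1^(1-β) := heq.symm
      _ ≤ k*b^β*σ*N^(1-β) := hstep
      _ ≤ F σ N := lb4 σ N hσ hN
  set K : Set (ℝ × ℝ) := Set.Icc s0 S ×ˢ Set.Icc n0 NR with hK_def
  have h11 : ((1:ℝ), (1:ℝ)) ∈ K := by
    constructor
    · exact ⟨min_le_left _ _, le_max_left _ _⟩
    · exact ⟨min_le_left _ _, le_max_left _ _⟩
  have hKc : IsCompact K := isCompact_Icc.prod isCompact_Icc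
  have hcont : ContinuousOn (fun x : ℝ × ℝ => F x.1 x.2) K := by
    have hg : ContinuousOn (fun x : ℝ × ℝ =>
        (k*x.1*x.2 + δ) * (Dmin + a^α * x.1^(-α) + b^β * x.2^(-β))) K := by
      apply ContinuousOn.mul
      · exact (((continuous_const.mul continuous_fst).mul continuous_snd).add
          continuous_const).continuousOn
      · apply ContinuousOn.add
        · apply ContinuousOn.add continuousOn_const
          exact continuousOn_const.mul (continuous_fst.continuousOn.rpow_const
            (fun x hx => Or.inl (ne_of_gt (lt_of_lt_of_le hs0 hx.1.1))))
        · exact continuousOn_const.mul (continuous_snd.continuousOn.rpow_const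
            (fun x hx => Or.inl (ne_of_gt (lt_of_lt_of_le hn0 hx.2.1))))
    apply hg.congr
    intro x hx
    exact hP x.1 x.2 (lt_of_lt_of_le hs0 hx.1.1) (lt_of_lt_of_le hn0 hx.2.1)
  obtain ⟨m, hmK, hmin⟩ := hKc.exists_isMinOn ⟨(1,1), h11⟩ hcont
  have hm1 : 0 < m.1 := lt_of_lt_of_le hs0 hmK.1.1
  have hm2 : 0 < m.2 := lt_of_lt_of_le hn0 hmK.2.1
  have hmM : F m.1 m.2 ≤ M := isMinOn_iff.mp hmin (1,1) h11
  refine ⟨m, hm1, hm2, ?_⟩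
  intro σ N hσ hN
  by_cases hin : (σ, N) ∈ K
  · exact isMinOn_iff.mp hmin (σ, N) hin
  · have hout : M + 1 ≤ F σ N := by
      rcases le_or_gt σ s0 with h | hσ1
      · exact hb1 σ N hσ hN h
      rcases le_or_gt N n0 with h | hN1
      · exact hb2 σ N hσ hN h
      rcases le_or_gt σ S with hσ2 | hσ2
      · rcases le_or_gt N NR with hN2 | hN2
        · exact absurd ⟨⟨hσ1.le, hσ2⟩, hN1.le, hN2⟩ hin
        · exact hb4 σ N hσ hN hσ1.le ((le_max_right 1 N1).trans hN2.le)
      · exact hb3 σ N hσ hN hN1.le ((le_max_right 1 S1).trans hσ2.le)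
    linarith

theorem stmt_7 (a b α β k δ Dmin : ℝ)
    (ha : 0 < a) (hb : 0 < b) (hk : 0 < k) (hδ : 0 < δ)
    (hα : 0 < α) (hα1 : α < 1) (hβ : 0 < β) (hβ1 : β < 1)
    (hDmin : 0 ≤ Dmin)
    (D : ℝ → ℝ → ℝ) (hD : ∀ σ N, D σ N = Dmin + (a / σ) ^ α + (b / N) ^ β)
    (C : ℝ → ℝ → ℝ) (hC : ∀ σ N, C σ N = k * σ * N * D σ N)
    (F : ℝ → ℝ → ℝ) (hF : ∀ σ N, F σ N = C σ N + δ * D σ N) :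
    (∃! p : ℝ × ℝ, 0 < p.1 ∧ 0 < p.2 ∧
        ∀ σ N, 0 < σ → 0 < N → F p.1 p.2 ≤ F σ N) ∧
    (∀ p : ℝ × ℝ, (0 < p.1 ∧ 0 < p.2 ∧
        ∀ σ N, 0 < σ → 0 < N → F p.1 p.2 ≤ F σ N) →
      p.2 = ((β * b ^ β) / (α * a ^ α)) ^ (1 / β) * p.1 ^ (α / β)) := by
  have hP : ∀ σ N, 0 < σ → 0 < N →
      F σ N = (k*σ*N + δ) * (Dmin + a^α * σ^(-α) + b^β * N^(-β)) := by
    intro σ N hσ hN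
    have e1 : (a/σ)^α = a^α * σ^(-α) := by
      rw [Real.div_rpow ha.le hσ.le, Real.rpow_neg hσ.le, div_eq_mul_inv]
    have e2 : (b/N)^β = b^β * N^(-β) := by
      rw [Real.div_rpow hb.le hN.le, Real.rpow_neg hN.le, div_eq_mul_inv]
    rw [hF, hC, hD, e1, e2]; ring
  set c : ℝ := ((β * b ^ β) / (α * a ^ α)) ^ (1 / β) with hc_def
  have hc : 0 < c := Real.rpow_pos_of_pos (by positivity) _
  -- every minimizer lies on the ridge and satisfies the scalar Φ-equation
  have ridge_all : ∀ p : ℝ × ℝ, (0 < p.1 ∧ 0 < p.2 ∧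
      ∀ σ N, 0 < σ → 0 < N → F p.1 p.2 ≤ F σ N) →
      p.2 = c * p.1 ^ (α / β) ∧
      β*k*c*Dmin*p.1^(1+α/β+α) + (β+α-α*β)*k*c*a^α*p.1^(1+α/β) = β*(δ*α*a^α) := by
    rintro ⟨s, n⟩ ⟨hs, hn, hmin⟩
    obtain ⟨e1, e2⟩ := aux_crit a b α β k δ Dmin F hP s n hs hn hmin
    have hpos : (0:ℝ) < k*s*n + δ := by positivity
    have hkey : α*a^α*s^(-α) = β*b^β*n^(-β) :=
      mul_left_cancel₀ hpos.ne' (e1.symm.trans e2)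
    have hridge : n = c * s ^ (α/β) := aux_ridge a b α β ha hb hα hβ s n hs hn hkey
    exact ⟨hridge, aux_phi a b α β k δ Dmin c s n hs e1 hkey hridge⟩
  obtain ⟨m, hm1, hm2, hmglobal⟩ :=
    aux_exists a b α β k δ Dmin ha hb hk hδ hα hα1 hβ hβ1 hDmin F hP
  have hmprop : 0 < m.1 ∧ 0 < m.2 ∧ ∀ σ N, 0 < σ → 0 < N → F m.1 m.2 ≤ F σ N :=
    ⟨hm1, hm2, hmglobal⟩
  constructor
  · refine ⟨m, hmprop, ?_⟩
    rintro q hq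
    obtain ⟨hqr, hqphi⟩ := ridge_all q hq
    obtain ⟨hmr, hmphi⟩ := ridge_all m hmprop
    have h1 : q.1 = m.1 :=
      aux_inj a α β k c Dmin δ ha hk hc hα hβ hβ1 hDmin q.1 m.1 hq.1 hm1 hqphi hmphi
    have h2 : q.2 = m.2 := by rw [hqr, hmr, h1]
    exact Prod.ext h1 h2
  · intro p hp
    exact (ridge_all p hp).1
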